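/- Let G be a compact Lie group with bi-invariant metric and {r^a}, {l^a} the right- and left-invariant orthonormal coframes. For 1-forms ω = (ω_R)_a r^a and ω̃ = (ω̃_L)_a l^a on G, the RL-convolution ω ⊗_{RL} ω̃ := ∫_G 𝔯_g(ω) ⊗ L_{g⁻¹}* ω̃ dg equals ((ω_R)_a ∗_{RL} (ω̃_L)_b) r^a ⊗ l^b, i.e. the tensor convolution reduces to the scalar convolution of the components in the mixed right/left-invariant bases. -/

import Mathlib

open MeasureTheory
open scoped Manifold

variable {E : Type*} [NormedAddCommGroup E] [NormedSpace ℝ E]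
  {G : Type*} [TopologicalSpace G] [ChartedSpace E G] [Group G] [IsTopologicalGroup G]
  (I : ModelWithCorners ℝ E E) [LieGroup I (⊤ : ℕ∞) G]
  [CompactSpace G] [MeasurableSpace G] [BorelSpace G]

/-- The right-invariant extension map on 1-forms:
`(𝔯_g ω)|_{g'} := (R_{g'⁻¹g})^* ω|_{g'}`, i.e. `(𝔯_g ω)_{g'}(u) = ω_g(d(R_{g'⁻¹g})_{g'} u)`,
where a 1-form is encoded as a family `G → (E → ℝ)` on the (trivialized) tangent spaces. -/
noncomputable def frakr1 (g : G) (ω : G → E → ℝ) : G → E → ℝ :=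
  fun g' u => ω g (mfderiv I I (fun x => x * (g'⁻¹ * g)) g' u)

/-- Pull-back of a 1-form along the left translation `L_{g⁻¹}`:
`(L_{g⁻¹}^* ω)|_x(u) = ω|_{g⁻¹x}(d(L_{g⁻¹})_x u)`. -/
noncomputable def pbL1 (g : G) (ω : G → E → ℝ) : G → E → ℝ :=
  fun x u => ω (g⁻¹ * x) (mfderiv I I (fun y => g⁻¹ * y) x u)

/-- The RL-convolution of two 1-forms: `(ω ⊗_{RL} ω̃)|_x := ∫ (𝔯_g ω)|_x ⊗ (L_{g⁻¹}^* ω̃)|_x dg`. -/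
noncomputable def convRL1 (μ : Measure G) (ω ωt : G → E → ℝ) : G → E → E → ℝ :=
  fun x u w => ∫ g, frakr1 I g ω x u * pbL1 I g ωt x w ∂μ

/-- Let `G` be a compact Lie group with bi-invariant metric and `{r^a}`,
`{l^a}` the right- and left-invariant coframes. For 1-forms `ω = (ω_R)_a r^a` and
`ω̃ = (ω̃_L)_a l^a` on `G`, the RL-convolution `ω ⊗_{RL} ω̃ = ∫ 𝔯_g(ω) ⊗ L_{g⁻¹}^* ω̃ dg`
equals `((ω_R)_a ∗_{RL} (ω̃_L)_b) r^a ⊗ l^b`: the tensor convolution reduces to the scalar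
convolution `(f ∗_{RL} f̃)(x) = ∫ f(g) f̃(g⁻¹x) dg` of the components in the mixed
right/left-invariant bases. -/
theorem convRL1_components
    (μ : Measure G) [μ.IsHaarMeasure] [IsProbabilityMeasure μ]
    (n : ℕ) (r l : Fin n → (G → E → ℝ))
    (hrInv : ∀ (g : G) (a : Fin n), frakr1 I g (r a) = r a)
    (hlInv : ∀ (g : G) (a : Fin n), pbL1 I g (l a) = l a)
    (ωR ωtL : Fin n → G → ℝ)
    (hωRsmooth : ∀ a, ContMDiff I 𝓘(ℝ, ℝ) (⊤ : ℕ∞) (ωR a))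
    (hωtLsmooth : ∀ a, ContMDiff I 𝓘(ℝ, ℝ) (⊤ : ℕ∞) (ωtL a))
    (ω ωt : G → E → ℝ)
    (hω : ∀ (x : G) (u : E), ω x u = ∑ a, ωR a x * r a x u)
    (hωt : ∀ (x : G) (u : E), ωt x u = ∑ a, ωtL a x * l a x u)
    (x : G) (u w : E) :
    convRL1 I μ ω ωt x u w =
      ∑ a, ∑ b, (∫ g, ωR a g * ωtL b (g⁻¹ * x) ∂μ) * (r a x u * l b x w) := by
  have key : ∀ g : G, frakr1 I g ω x u * pbL1 I g ωt x w
      = ∑ a, ∑ b, ωR a g * ωtL b (g⁻¹ * x) * (r a x u * l b x w) := by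
    intro g
    have h1 : frakr1 I g ω x u = ∑ a, ωR a g * r a x u := by
      erw [frakr1, hω]
      refine Finset.sum_congr rfl fun a _ => ?_
      have h := congrFun (congrFun (hrInv g a) x) u
      rw [frakr1] at h
      rw [h]
    have h2 : pbL1 I g ωt x w = ∑ b, ωtL b (g⁻¹ * x) * l b x w := by
      erw [pbL1, hωt]
      refine Finset.sum_congr rfl fun b _ => ?_
      have h := congrFun (congrFun (hlInv g b) x) w
      rw [pbL1] at h
      rw [h]
    rw [h1, h2, Finset.sum_mul_sum]
    refine Finset.sum_congr rfl fun a _ => Finset.sum_congr rfl fun b _ => ?_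
    ring
  have hint : ∀ (a b : Fin n), Integrable
      (fun g => ωR a g * ωtL b (g⁻¹ * x) * (r a x u * l b x w)) μ := by
    intro a b
    have hc : Continuous fun g : G => ωR a g * ωtL b (g⁻¹ * x) * (r a x u * l b x w) := by
      refine (((hωRsmooth a).continuous.mul (((hωtLsmooth b).continuous.comp
        ?_))).mul continuous_const)
      exact (continuous_inv.mul continuous_const)
    exact hc.integrable_of_hasCompactSupport (HasCompactSupport.of_compactSpace _)
  rw [convRL1]
  simp only [key]
  rw [integral_finset_sum _ (fun a _ => integrable_finset_sum _ (fun b _ => hint a b))]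
  refine Finset.sum_congr rfl fun a _ => ?_
  rw [integral_finset_sum _ (fun b _ => hint a b)]
  refine Finset.sum_congr rfl fun b _ => ?_
  rw [← integral_mul_const]
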